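/- For every k ∈ ℕ and every Lebesgue-measurable set E ⊆ [0, ∞) of finite measure |E|: ∫_E (r^k/k!) e^{-r} dr ≤ 1 − e^{-|E|} = ∫_0^{|E|} e^{-r} dr. -/

import Mathlib

open Real MeasureTheory

lemma lint_exp_Ico (c m : ℝ) (hm : 0 ≤ m) :
    ∫⁻ r in Set.Ico c (c + m), ENNReal.ofReal (Real.exp (-r)) =
      ENNReal.ofReal (Real.exp (-c) - Real.exp (-(c + m))) := by
  rw [← MeasureTheory.ofReal_integral_eq_lintegral_ofReal]
  · congr 1
    rw [MeasureTheory.integral_Ico_eq_integral_Ioo,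
      ← MeasureTheory.integral_Ioc_eq_integral_Ioo,
      ← intervalIntegral.integral_of_le (by linarith : c ≤ c + m),
      intervalIntegral.integral_comp_neg (fun x => Real.exp x), integral_exp]
  · exact ((Real.continuous_exp.comp continuous_neg).integrableOn_Icc).mono_set
      Set.Ico_subset_Icc_self
  · exact Filter.Eventually.of_forall fun x => (Real.exp_pos _).le

lemma lint_exp_le (c : ℝ) (A : Set ℝ) (hA : MeasurableSet A) (hA0 : A ⊆ Set.Ici c)
    (hfin : volume A < ⊤) :
    ∫⁻ r in A, ENNReal.ofReal (Real.exp (-r)) ≤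
      ENNReal.ofReal (Real.exp (-c) - Real.exp (-(c + (volume A).toReal))) := by
  set m := (volume A).toReal with hm
  have hm0 : 0 ≤ m := ENNReal.toReal_nonneg
  set I := Set.Ico c (c + m) with hI
  have hImeas : MeasurableSet I := measurableSet_Ico
  have hvolI : volume I = volume A := by
    rw [hI, Real.volume_Ico, hm, add_sub_cancel_left, ENNReal.ofReal_toReal hfin.ne]
  have hsplitA : (∫⁻ r in A, ENNReal.ofReal (Real.exp (-r))) =
      (∫⁻ r in A ∩ I, ENNReal.ofReal (Real.exp (-r))) +
        (∫⁻ r in A \ I, ENNReal.ofReal (Real.exp (-r))) := by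
    rw [← lintegral_inter_add_diff _ A hImeas]
  have hsplitI : (∫⁻ r in I, ENNReal.ofReal (Real.exp (-r))) =
      (∫⁻ r in I ∩ A, ENNReal.ofReal (Real.exp (-r))) +
        (∫⁻ r in I \ A, ENNReal.ofReal (Real.exp (-r))) := by
    rw [← lintegral_inter_add_diff _ I hA]
  have hmeq : volume (A \ I) = volume (I \ A) := by
    have h1 : volume (A \ I) + volume (A ∩ I) = volume A := measure_diff_add_inter A hImeas
    have h2 : volume (I \ A) + volume (I ∩ A) = volume I := measure_diff_add_inter I hA
    rw [Set.inter_comm] at h2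
    rw [hvolI] at h2
    have hfin' : volume (A ∩ I) ≠ ⊤ := (lt_of_le_of_lt (measure_mono Set.inter_subset_left) hfin).ne
    exact WithTop.add_right_cancel hfin' (h1.trans h2.symm)
  have hub : (∫⁻ r in A \ I, ENNReal.ofReal (Real.exp (-r))) ≤
      ENNReal.ofReal (Real.exp (-(c + m))) * volume (A \ I) := by
    rw [← setLIntegral_const]
    refine setLIntegral_mono measurable_const fun r hr => ?_
    refine ENNReal.ofReal_le_ofReal (Real.exp_le_exp.mpr ?_)
    have h1 : c ≤ r := hA0 hr.1
    have h2 : ¬ (r < c + m) := fun h => hr.2 ⟨h1, h⟩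
    linarith [not_lt.mp h2]
  have hlb : ENNReal.ofReal (Real.exp (-(c + m))) * volume (I \ A) ≤
      (∫⁻ r in I \ A, ENNReal.ofReal (Real.exp (-r))) := by
    rw [← setLIntegral_const]
    refine setLIntegral_mono (by fun_prop) fun r hr => ?_
    exact ENNReal.ofReal_le_ofReal (Real.exp_le_exp.mpr (by linarith [hr.1.2]))
  calc (∫⁻ r in A, ENNReal.ofReal (Real.exp (-r)))
      ≤ (∫⁻ r in A ∩ I, ENNReal.ofReal (Real.exp (-r))) +
        ENNReal.ofReal (Real.exp (-(c + m))) * volume (I \ A) := by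
        rw [hsplitA, ← hmeq]; exact add_le_add le_rfl hub
    _ ≤ (∫⁻ r in I, ENNReal.ofReal (Real.exp (-r))) := by
        rw [hsplitI, Set.inter_comm]; exact add_le_add le_rfl hlb
    _ = ENNReal.ofReal (Real.exp (-c) - Real.exp (-(c + m))) := lint_exp_Ico c m hm0

lemma lint_gamma (j : ℕ) :
    ∫⁻ s in Set.Ioi (0:ℝ),
      ENNReal.ofReal (s ^ j / (Nat.factorial j) * Real.exp (-s)) = 1 := by
  have hrpow : ∀ s ∈ Set.Ioi (0:ℝ),
      Real.exp (-s) * s ^ (((j:ℝ) + 1) - 1) = s ^ j * Real.exp (-s) := by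
    intro s hs
    rw [add_sub_cancel_right, Real.rpow_natCast, mul_comm]
  have hint : IntegrableOn (fun s : ℝ => s ^ j * Real.exp (-s)) (Set.Ioi 0) := by
    refine (Real.GammaIntegral_convergent (show (0:ℝ) < (j:ℝ) + 1 by positivity)).congr_fun
      ?_ measurableSet_Ioi
    exact hrpow
  have hval : ∫ s in Set.Ioi (0:ℝ), s ^ j * Real.exp (-s) = (Nat.factorial j : ℝ) := by
    rw [← setIntegral_congr_fun measurableSet_Ioi hrpow,
      ← Real.Gamma_eq_integral (show (0:ℝ) < (j:ℝ) + 1 by positivity),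
      Real.Gamma_nat_eq_factorial]
  have heq : ∀ s : ℝ, s ^ j / (Nat.factorial j) * Real.exp (-s)
      = (s ^ j * Real.exp (-s)) * ((Nat.factorial j : ℝ))⁻¹ := by
    intro s; ring
  simp only [heq]
  rw [← MeasureTheory.ofReal_integral_eq_lintegral_ofReal (hint.mul_const _)]
  · rw [MeasureTheory.integral_mul_const, hval, mul_inv_cancel₀ (by positivity), ENNReal.ofReal_one]
  · filter_upwards [MeasureTheory.ae_restrict_mem measurableSet_Ioi] with s hs
    have : (0:ℝ) < s := hs
    positivity

lemma lint_main (k : ℕ) (E : Set ℝ) (hE : MeasurableSet E)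
    (hE₀ : E ⊆ Set.Ici (0 : ℝ)) (hEfin : volume E < ⊤) :
    ∫⁻ r in E, ENNReal.ofReal (r ^ k / (Nat.factorial k) * Real.exp (-r)) ≤
      ENNReal.ofReal (1 - Real.exp (-(volume E).toReal)) := by
  set m := (volume E).toReal with hm
  have hm0 : 0 ≤ m := ENNReal.toReal_nonneg
  obtain _ | j := k
  · have h := lint_exp_le 0 E hE hE₀ hEfin
    simp only [Real.exp_zero, neg_zero, zero_add, ← hm] at h
    simpa using h
  · set F : ℝ → ℝ → ENNReal := fun r s =>
      if s ≤ r then ENNReal.ofReal (s ^ j / (Nat.factorial j) * Real.exp (-r)) else 0 with hF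
    have hFmeas : Measurable (Function.uncurry F) := by
      have : Function.uncurry F = fun p : ℝ × ℝ =>
          if p.2 ≤ p.1 then ENNReal.ofReal (p.2 ^ j / (Nat.factorial j) * Real.exp (-p.1))
          else 0 := rfl
      rw [this]
      exact Measurable.ite (measurableSet_le measurable_snd measurable_fst)
        (Measurable.ennreal_ofReal (by fun_prop)) measurable_const
    have step1 : ∀ r : ℝ, 0 ≤ r →
        ENNReal.ofReal (r ^ (j + 1) / (Nat.factorial (j + 1)) * Real.exp (-r)) =
          ∫⁻ s in Set.Ioi (0:ℝ), F r s := by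
      intro r hr
      have hind : (fun s => F r s) = Set.indicator (Set.Iic r)
          (fun s => ENNReal.ofReal (s ^ j / (Nat.factorial j) * Real.exp (-r))) := by
        funext s; simp [hF, Set.indicator_apply, Set.mem_Iic]
      rw [hind, lintegral_indicator measurableSet_Iic,
        Measure.restrict_restrict measurableSet_Iic,
        show Set.Iic r ∩ Set.Ioi 0 = Set.Ioc 0 r from by
          rw [Set.inter_comm, Set.Ioi_inter_Iic],
        ← MeasureTheory.ofReal_integral_eq_lintegral_ofReal]
      · congr 1
        rw [← intervalIntegral.integral_of_le hr]
        have hfun : ∀ s : ℝ, s ^ j / (Nat.factorial j) * Real.exp (-r)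
            = s ^ j * (Real.exp (-r) / (Nat.factorial j)) := fun s => by ring
        simp only [hfun]
        rw [intervalIntegral.integral_mul_const, integral_pow]
        have hjf : (Nat.factorial (j+1) : ℝ) = (j+1) * Nat.factorial j := by
          rw [Nat.factorial_succ]; push_cast; ring
        have h1 : (Nat.factorial j : ℝ) ≠ 0 := by positivity
        have h2 : ((j:ℝ) + 1) ≠ 0 := by positivity
        rw [hjf]
        field_simp
        try ring
      · exact ((by fun_prop : Continuous fun s : ℝ => s ^ j / (Nat.factorial j : ℝ) *
          Real.exp (-r)).integrableOn_Icc).mono_set Set.Ioc_subset_Icc_self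
      · filter_upwards [MeasureTheory.ae_restrict_mem measurableSet_Ioc] with s hs
        exact mul_nonneg (div_nonneg (pow_nonneg hs.1.le j) (Nat.cast_nonneg _))
          (Real.exp_pos _).le
    have step4 : ∀ s : ℝ, s ∈ Set.Ioi (0:ℝ) →
        (∫⁻ r in E, F r s) ≤
          ENNReal.ofReal (s ^ j / (Nat.factorial j) * Real.exp (-s)) *
            ENNReal.ofReal (1 - Real.exp (-m)) := by
      intro s hs
      have hs0 : (0:ℝ) < s := hs
      have hcoef : (0:ℝ) ≤ s ^ j / (Nat.factorial j) := by positivity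
      have hind : (fun r => F r s) = Set.indicator (Set.Ici s)
          (fun r => ENNReal.ofReal (s ^ j / (Nat.factorial j) * Real.exp (-r))) := by
        funext r; simp [hF, Set.indicator_apply, Set.mem_Ici]
      have hAmeas : MeasurableSet (E ∩ Set.Ici s) := hE.inter measurableSet_Ici
      have hAfin : volume (E ∩ Set.Ici s) < ⊤ :=
        lt_of_le_of_lt (measure_mono Set.inter_subset_left) hEfin
      set ms := (volume (E ∩ Set.Ici s)).toReal with hms
      have hle : ms ≤ m :=
        ENNReal.toReal_mono hEfin.ne (measure_mono Set.inter_subset_left)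
      calc (∫⁻ r in E, F r s)
          = ∫⁻ r in E ∩ Set.Ici s,
              ENNReal.ofReal (s ^ j / (Nat.factorial j) * Real.exp (-r)) := by
            rw [hind, lintegral_indicator measurableSet_Ici,
              Measure.restrict_restrict measurableSet_Ici, Set.inter_comm]
        _ = ENNReal.ofReal (s ^ j / (Nat.factorial j)) *
              ∫⁻ r in E ∩ Set.Ici s, ENNReal.ofReal (Real.exp (-r)) := by
            rw [← lintegral_const_mul _ (by fun_prop)]
            congr 1; funext r
            rw [← ENNReal.ofReal_mul hcoef]
        _ ≤ ENNReal.ofReal (s ^ j / (Nat.factorial j)) *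
              ENNReal.ofReal (Real.exp (-s) - Real.exp (-(s + ms))) := by
            exact mul_le_mul_of_nonneg_left (lint_exp_le s _ hAmeas Set.inter_subset_right hAfin) zero_le
        _ ≤ ENNReal.ofReal (s ^ j / (Nat.factorial j)) *
              ENNReal.ofReal (Real.exp (-s) * (1 - Real.exp (-m))) := by
            refine mul_le_mul_of_nonneg_left (ENNReal.ofReal_le_ofReal ?_) zero_le
            have e1 : Real.exp (-(s + ms)) = Real.exp (-s) * Real.exp (-ms) := by
              rw [neg_add, Real.exp_add]
            have e2 : Real.exp (-m) ≤ Real.exp (-ms) := Real.exp_le_exp.mpr (by linarith)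
            nlinarith [Real.exp_pos s, Real.exp_pos (-s)]
        _ = ENNReal.ofReal (s ^ j / (Nat.factorial j) * Real.exp (-s)) *
              ENNReal.ofReal (1 - Real.exp (-m)) := by
            rw [ENNReal.ofReal_mul (Real.exp_pos _).le, ← mul_assoc,
              ← ENNReal.ofReal_mul hcoef]
    calc (∫⁻ r in E, ENNReal.ofReal (r ^ (j+1) / (Nat.factorial (j+1)) * Real.exp (-r)))
        = ∫⁻ r in E, ∫⁻ s in Set.Ioi (0:ℝ), F r s := by
          refine setLIntegral_congr_fun hE (fun r hr => ?_)
          exact step1 r (hE₀ hr)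
      _ = ∫⁻ s in Set.Ioi (0:ℝ), ∫⁻ r in E, F r s := by
          exact lintegral_lintegral_swap hFmeas.aemeasurable
      _ ≤ ∫⁻ s in Set.Ioi (0:ℝ),
            ENNReal.ofReal (s ^ j / (Nat.factorial j) * Real.exp (-s)) *
              ENNReal.ofReal (1 - Real.exp (-m)) := by
          exact setLIntegral_mono' measurableSet_Ioi step4
      _ = (∫⁻ s in Set.Ioi (0:ℝ),
            ENNReal.ofReal (s ^ j / (Nat.factorial j) * Real.exp (-s))) *
              ENNReal.ofReal (1 - Real.exp (-m)) := by
          rw [lintegral_mul_const _ (by fun_prop)]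
      _ = ENNReal.ofReal (1 - Real.exp (-m)) := by rw [lint_gamma j, one_mul]

/-- For every `k ∈ ℕ` and every measurable `E ⊆ [0,∞)` of finite measure:
`∫_E (r^k/k!) e^{-r} dr ≤ 1 − e^{-|E|} = ∫_0^{|E|} e^{-r} dr`. -/
theorem integral_fEigen_le_disk (k : ℕ) (E : Set ℝ) (hE : MeasurableSet E)
    (hE₀ : E ⊆ Set.Ici (0 : ℝ)) (hEfin : volume E < ⊤) :
    (∫ r in E, r ^ k / (Nat.factorial k) * Real.exp (-r)) ≤
        1 - Real.exp (-(volume E).toReal) ∧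
      (1 : ℝ) - Real.exp (-(volume E).toReal) =
        ∫ r in (0 : ℝ)..(volume E).toReal, Real.exp (-r) := by
  have hub : (0:ℝ) ≤ 1 - Real.exp (-(volume E).toReal) := by
    have h1 : Real.exp (-(volume E).toReal) ≤ Real.exp 0 :=
      Real.exp_le_exp.mpr (neg_nonpos.mpr ENNReal.toReal_nonneg)
    rw [Real.exp_zero] at h1; linarith
  constructor
  · have hnn : 0 ≤ᵐ[volume.restrict E]
        fun r => r ^ k / (Nat.factorial k) * Real.exp (-r) := by
      filter_upwards [MeasureTheory.ae_restrict_mem hE] with r hr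
      have h0 : (0:ℝ) ≤ r := hE₀ hr
      positivity
    rw [MeasureTheory.integral_eq_lintegral_of_nonneg_ae hnn
      ((by fun_prop : Continuous fun r : ℝ =>
        r ^ k / (Nat.factorial k) * Real.exp (-r)).aestronglyMeasurable)]
    exact ENNReal.toReal_le_of_le_ofReal hub (lint_main k E hE hE₀ hEfin)
  · rw [intervalIntegral.integral_comp_neg (fun x => Real.exp x), integral_exp, neg_zero,
      Real.exp_zero]
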